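/- Let d be a natural number, M Q : Matrix (Fin d) (Fin d) ℝ with Q symmetric (Qᵀ = Q), let c₂ > 0 and δ ≥ 0 be reals with Q * M + Mᵀ * Q = −c₂ • (1 : Matrix (Fin d) (Fin d) ℝ), let x g : ℝ → (Fin d → ℝ) and t : ℝ with HasDerivAt x (M.mulVec (x t) + g t) t and √(∑ᵢ (g t i)²) ≤ δ. Then the derivative at t of the function W : s ↦ (x s) ⬝ᵥ (Q.mulVec (x s)) is at most −c₂ · (∑ᵢ (x t i)²) + 2 · δ · ‖Q‖ · √(∑ᵢ (x t i)²), where ‖Q‖ is the ℓ²→ℓ² operator norm of Q; in particular, if √(∑ᵢ (x t i)²) > 2δ‖Q‖/c₂ then this derivative is negative. -/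

import Mathlib

open Matrix

/-- The ℓ²→ℓ² operator norm of a real square matrix. -/
noncomputable def l2OpNorm {d : ℕ} (Q : Matrix (Fin d) (Fin d) ℝ) : ℝ :=
  ‖Matrix.toEuclideanCLM (𝕜 := ℝ) Q‖

/-- Dissipation inequality in the proof of Theorem 2 of the paper:
if `QM + MᵀQ = −c₂ I` and `‖g t‖ ≤ δ`, then along `ẋ = Mx + g` the derivative
of `W = xᵀQx` is at most `−c₂‖x‖² + 2δ‖Q‖‖x‖`; in particular it is negative
whenever `‖x t‖ > 2δ‖Q‖/c₂`. -/
theorem lyapunov_dissipation (d : ℕ)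
    (M Q : Matrix (Fin d) (Fin d) ℝ) (hQ : Qᵀ = Q)
    (c₂ δ : ℝ) (hc₂ : 0 < c₂) (hδ : 0 ≤ δ)
    (hLyap : Q * M + Mᵀ * Q = (-c₂) • (1 : Matrix (Fin d) (Fin d) ℝ))
    (x g : ℝ → (Fin d → ℝ)) (t : ℝ)
    (hx : HasDerivAt x (M.mulVec (x t) + g t) t)
    (hg : Real.sqrt (∑ i, (g t i) ^ 2) ≤ δ) :
    deriv (fun s => (x s) ⬝ᵥ (Q.mulVec (x s))) t
        ≤ -c₂ * (∑ i, (x t i) ^ 2)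
          + 2 * δ * l2OpNorm Q * Real.sqrt (∑ i, (x t i) ^ 2)
      ∧ (Real.sqrt (∑ i, (x t i) ^ 2) > 2 * δ * l2OpNorm Q / c₂ →
          deriv (fun s => (x s) ⬝ᵥ (Q.mulVec (x s))) t < 0) := by
  classical
  set v : Fin d → ℝ := M.mulVec (x t) + g t with hv
  set X : Fin d → ℝ := x t with hX
  set G : Fin d → ℝ := g t with hG
  have hxi : ∀ i, HasDerivAt (fun s => x s i) (v i) t := hasDerivAt_pi.mp hx
  -- derivative of W
  have hderiv : HasDerivAt (fun s => (x s) ⬝ᵥ (Q.mulVec (x s)))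
      (v ⬝ᵥ Q.mulVec X + X ⬝ᵥ Q.mulVec v) t := by
    have h1 : HasDerivAt (fun s => ∑ i, x s i * ∑ j, Q i j * x s j)
        (∑ i, (v i * ∑ j, Q i j * x t j + x t i * ∑ j, Q i j * v j)) t :=
      HasDerivAt.fun_sum fun i _ =>
        (hxi i).fun_mul (HasDerivAt.fun_sum fun j _ => (hxi j).const_mul (Q i j))
    have e1 : (fun s => (x s) ⬝ᵥ (Q.mulVec (x s)))
        = fun s => ∑ i, x s i * ∑ j, Q i j * x s j := by
      funext s; simp [dotProduct, mulVec]
    have e2 : (∑ i, (v i * ∑ j, Q i j * x t j + x t i * ∑ j, Q i j * v j))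
        = v ⬝ᵥ Q.mulVec X + X ⬝ᵥ Q.mulVec v := by
      rw [Finset.sum_add_distrib]; simp [dotProduct, mulVec, hX]
    rw [e1, ← e2]; exact h1
  have hD : deriv (fun s => (x s) ⬝ᵥ (Q.mulVec (x s))) t
      = v ⬝ᵥ Q.mulVec X + X ⬝ᵥ Q.mulVec v := hderiv.deriv
  -- rewrite the derivative using the Lyapunov equation
  have htrans : ∀ (A : Matrix (Fin d) (Fin d) ℝ) (a b : Fin d → ℝ),
      (A.mulVec a) ⬝ᵥ b = a ⬝ᵥ (Aᵀ.mulVec b) := by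
    intro A a b
    rw [dotProduct_mulVec, vecMul_transpose, dotProduct_comm]
  have key : v ⬝ᵥ Q.mulVec X + X ⬝ᵥ Q.mulVec v
      = -c₂ * (∑ i, X i ^ 2) + 2 * (X ⬝ᵥ Q.mulVec G) := by
    have h1 : v ⬝ᵥ Q.mulVec X
        = X ⬝ᵥ ((Mᵀ * Q).mulVec X) + X ⬝ᵥ Q.mulVec G := by
      rw [hv, add_dotProduct, htrans M X (Q.mulVec X), mulVec_mulVec,
        dotProduct_comm G (Q.mulVec X), htrans Q X G, hQ]
    have h2 : X ⬝ᵥ Q.mulVec v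
        = X ⬝ᵥ ((Q * M).mulVec X) + X ⬝ᵥ Q.mulVec G := by
      rw [hv, mulVec_add, dotProduct_add, mulVec_mulVec]
    have h3 : X ⬝ᵥ ((Q * M).mulVec X) + X ⬝ᵥ ((Mᵀ * Q).mulVec X)
        = -c₂ * (∑ i, X i ^ 2) := by
      rw [← dotProduct_add, ← add_mulVec, hLyap]
      rw [neg_smul, neg_mulVec, smul_mulVec, one_mulVec]
      simp only [dotProduct, sq, neg_mul, neg_inj, Finset.mul_sum]
      exact Finset.sum_congr rfl fun i _ => by simp only [Pi.neg_apply, Pi.smul_apply, smul_eq_mul]; ring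
    rw [h1, h2]; linarith [h3]
  -- bound the cross term
  set nQ : ℝ := l2OpNorm Q with hnQ
  have hnQ0 : 0 ≤ nQ := norm_nonneg _
  set X' : EuclideanSpace ℝ (Fin d) := (WithLp.equiv 2 _).symm X with hX'
  set G' : EuclideanSpace ℝ (Fin d) := (WithLp.equiv 2 _).symm G with hG'
  have hnX : ‖X'‖ = Real.sqrt (∑ i, X i ^ 2) := by
    rw [EuclideanSpace.norm_eq]
    congr 1; apply Finset.sum_congr rfl; intro i _
    simp [hX', Real.norm_eq_abs, sq_abs]
  have hnG : ‖G'‖ = Real.sqrt (∑ i, G i ^ 2) := by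
    rw [EuclideanSpace.norm_eq]
    congr 1; apply Finset.sum_congr rfl; intro i _
    simp [hG', Real.norm_eq_abs, sq_abs]
  have hsX0 : 0 ≤ Real.sqrt (∑ i, X i ^ 2) := Real.sqrt_nonneg _
  have hcross : X ⬝ᵥ Q.mulVec G ≤ δ * nQ * Real.sqrt (∑ i, X i ^ 2) := by
    have hip : X ⬝ᵥ Q.mulVec G = inner (𝕜 := ℝ) X' (toEuclideanCLM (𝕜 := ℝ) Q G') := by
      rw [hG', WithLp.equiv_symm_apply, toEuclideanCLM_toLp]
      simp [dotProduct, PiLp.inner_apply, hX', RCLike.inner_apply, mul_comm]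
    calc X ⬝ᵥ Q.mulVec G = inner (𝕜 := ℝ) X' (toEuclideanCLM (𝕜 := ℝ) Q G') := hip
      _ ≤ ‖X'‖ * ‖toEuclideanCLM (𝕜 := ℝ) Q G'‖ := real_inner_le_norm _ _
      _ ≤ ‖X'‖ * (nQ * ‖G'‖) := by
          apply mul_le_mul_of_nonneg_left ((toEuclideanCLM (𝕜 := ℝ) Q).le_opNorm G')
            (norm_nonneg _)
      _ ≤ ‖X'‖ * (nQ * δ) := by
          apply mul_le_mul_of_nonneg_left _ (norm_nonneg _)
          exact mul_le_mul_of_nonneg_left (by rw [hnG]; exact hg) hnQ0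
      _ = δ * nQ * Real.sqrt (∑ i, X i ^ 2) := by rw [hnX]; ring
  have main : deriv (fun s => (x s) ⬝ᵥ (Q.mulVec (x s))) t
      ≤ -c₂ * (∑ i, X i ^ 2) + 2 * δ * nQ * Real.sqrt (∑ i, X i ^ 2) := by
    rw [hD, key]; linarith
  refine ⟨main, fun hball => ?_⟩
  have hsq : Real.sqrt (∑ i, X i ^ 2) ^ 2 = ∑ i, X i ^ 2 :=
    Real.sq_sqrt (Finset.sum_nonneg fun i _ => sq_nonneg _)
  have hpos : 0 < Real.sqrt (∑ i, X i ^ 2) :=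
    lt_of_le_of_lt (by positivity) hball
  have hgt : 2 * δ * nQ < c₂ * Real.sqrt (∑ i, X i ^ 2) :=
    (div_lt_iff₀' hc₂).mp hball
  refine lt_of_le_of_lt main ?_
  nlinarith [hpos, hgt, hsq]
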